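/- A point λ = (λ_1,…,λ_n) ∈ ℂ^n is an eigenvalue for the adjoint tuple if and only if the series Σ over all words w in F_n^+ of |w(λ)|² · W(e,w)^{-2} converges. -/

import Mathlib

noncomputable section
open scoped ENNReal

/-- Auxiliary recursion for the weight function: `W(u, []) = 1` and, reading the word
`w = i_k ⋯ i_1` as the list `[i_k, …, i_1]`,
`W(u, i :: w) = λ_{i, w·u} · W(u, w)`, so that
`W(u, i_k⋯i_1) = λ_{i_1,u} · λ_{i_2, i_1 u} ⋯ λ_{i_k, i_{k-1}⋯i_1 u}`. -/
def Waux {n : ℕ} (lam : Fin n → FreeMonoid (Fin n) → ℝ) (u : FreeMonoid (Fin n)) :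
    List (Fin n) → ℝ
  | [] => 1
  | i :: w => lam i (FreeMonoid.ofList w * u) * Waux lam u w

/-- The weight function `W : F_n^+ × F_n^+ → ℝ` associated to the weights `λ_{i,w}`. -/
def Wfun {n : ℕ} (lam : Fin n → FreeMonoid (Fin n) → ℝ) (u w : FreeMonoid (Fin n)) : ℝ :=
  Waux lam u (FreeMonoid.toList w)

instance {n : ℕ} : DecidableEq (FreeMonoid (Fin n)) := Classical.decEq _

/-- `n`-variable Fock space `H_n = ℓ²(F_n^+)`. -/
abbrev Hn (n : ℕ) : Type := lp (fun _ : FreeMonoid (Fin n) => ℂ) 2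

/-- The standard orthonormal basis vector `ξ_w` of `H_n`. -/
def xi {n : ℕ} (w : FreeMonoid (Fin n)) : Hn n := lp.single 2 w 1

/-- `w(λ) = λ_{i_1} ⋯ λ_{i_k}` for a word `w = i_1 ⋯ i_k`, with `e(λ) = 1`. -/
def wl {n : ℕ} (l : Fin n → ℂ) (w : FreeMonoid (Fin n)) : ℂ :=
  ((FreeMonoid.toList w).map l).prod


namespace EigenvalueAux

open FreeMonoid

variable {n : ℕ} {lam : Fin n → FreeMonoid (Fin n) → ℝ} {l : Fin n → ℂ}

lemma Waux_pos (hpos : ∀ i w, 0 < lam i w) (u : FreeMonoid (Fin n)) :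
    ∀ L : List (Fin n), 0 < Waux lam u L
  | [] => one_pos
  | i :: t => mul_pos (hpos _ _) (Waux_pos hpos u t)

lemma Wfun_pos (hpos : ∀ i w, 0 < lam i w) (u w : FreeMonoid (Fin n)) :
    0 < Wfun lam u w := Waux_pos hpos u _

lemma Wfun_cons (i : Fin n) (w : FreeMonoid (Fin n)) :
    Wfun lam 1 (FreeMonoid.of i * w) = lam i w * Wfun lam 1 w := by
  show Waux lam 1 (i :: FreeMonoid.toList w) = _
  rw [Waux]
  rw [show FreeMonoid.ofList (FreeMonoid.toList w) * 1 = w by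
    rw [FreeMonoid.ofList_toList, mul_one]]
  rfl

lemma wl_cons (i : Fin n) (w : FreeMonoid (Fin n)) :
    wl l (FreeMonoid.of i * w) = l i * wl l w := by
  simp [wl, FreeMonoid.toList_of_mul]

/-- The candidate eigenvector coefficients. -/
def c (lam : Fin n → FreeMonoid (Fin n) → ℝ) (l : Fin n → ℂ) (w : FreeMonoid (Fin n)) : ℂ :=
  (starRingEnd ℂ) (wl l w) * (((Wfun lam 1 w : ℝ) : ℂ))⁻¹

lemma c_one : c lam l 1 = 1 := by
  simp [c, wl, Wfun, FreeMonoid.toList_one, Waux]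

lemma c_rec (hpos : ∀ i w, 0 < lam i w) (i : Fin n) (w : FreeMonoid (Fin n)) :
    (lam i w : ℂ) * c lam l (FreeMonoid.of i * w) = (starRingEnd ℂ) (l i) * c lam l w := by
  have h1 : (lam i w : ℝ) ≠ 0 := (hpos i w).ne'
  have h2 : ((lam i w : ℝ) : ℂ) ≠ 0 := by exact_mod_cast h1
  have h3 : ((Wfun lam 1 w : ℝ) : ℂ) ≠ 0 := by exact_mod_cast (Wfun_pos hpos 1 w).ne'
  rw [c, c, wl_cons, Wfun_cons, map_mul]
  push_cast
  field_simp

lemma norm_c_sq (hpos : ∀ i w, 0 < lam i w) (w : FreeMonoid (Fin n)) :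
    ‖c lam l w‖ ^ 2 = ‖wl l w‖ ^ 2 * ((Wfun lam 1 w) ^ 2)⁻¹ := by
  have h1 : (0:ℝ) < Wfun lam 1 w := Wfun_pos hpos 1 w
  rw [c, norm_mul, norm_inv, RCLike.norm_conj, Complex.norm_real,
    Real.norm_of_nonneg h1.le, mul_pow, inv_pow]

lemma apply_eq_inner (η : Hn n) (w : FreeMonoid (Fin n)) :
    η w = @inner ℂ _ _ (xi w) η := by
  rw [xi, lp.inner_single_left, RCLike.inner_apply, map_one, mul_one]

lemma adjoint_apply (T : Fin n → (Hn n →L[ℂ] Hn n))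
    (hT : ∀ i w, T i (xi w) = (lam i w : ℂ) • xi (FreeMonoid.of i * w))
    (ξ : Hn n) (i : Fin n) (w : FreeMonoid (Fin n)) :
    (ContinuousLinearMap.adjoint (T i) ξ) w = (lam i w : ℂ) * ξ (FreeMonoid.of i * w) := by
  rw [apply_eq_inner, ContinuousLinearMap.adjoint_inner_right, hT, inner_smul_left,
    ← apply_eq_inner, Complex.conj_ofReal]

end EigenvalueAux

open EigenvalueAux in
/-- `λ ∈ ℂⁿ` is an eigenvalue for the adjoint tuple if and only if the
series `Σ_w |w(λ)|² · W(e,w)⁻²` converges. -/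
theorem eigenvalue_iff_summable (n : ℕ) (hn : 2 ≤ n)
    (lam : Fin n → FreeMonoid (Fin n) → ℝ)
    (hpos : ∀ i w, 0 < lam i w) (hbdd : ∃ C : ℝ, ∀ i w, lam i w ≤ C)
    (T : Fin n → (Hn n →L[ℂ] Hn n))
    (hT : ∀ i w, T i (xi w) = (lam i w : ℂ) • xi (FreeMonoid.of i * w))
    (l : Fin n → ℂ) :
    (∃ ξ : Hn n, ξ ≠ 0 ∧
        ∀ i, ContinuousLinearMap.adjoint (T i) ξ = (starRingEnd ℂ) (l i) • ξ) ↔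
      Summable (fun w : FreeMonoid (Fin n) => ‖wl l w‖ ^ 2 * ((Wfun lam 1 w) ^ 2)⁻¹) := by
  have hts : ((2 : ℝ≥0∞)).toReal = 2 := by norm_num
  constructor
  · rintro ⟨ξ, hne, heig⟩
    have hcoef : ∀ i w, (lam i w : ℂ) * ξ (FreeMonoid.of i * w)
        = (starRingEnd ℂ) (l i) * ξ w := by
      intro i w
      rw [← adjoint_apply T hT ξ i w, heig i]
      rw [lp.coeFn_smul, Pi.smul_apply, smul_eq_mul]
    have key : ∀ L : List (Fin n), ξ (FreeMonoid.ofList L) = c lam l (FreeMonoid.ofList L) * ξ 1 := by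
      intro L
      induction L with
      | nil =>
        rw [show FreeMonoid.ofList ([] : List (Fin n)) = 1 from rfl, c_one, one_mul]
      | cons i t ih =>
        have hne' : (lam i (FreeMonoid.ofList t) : ℂ) ≠ 0 := by
          exact_mod_cast (hpos i _).ne'
        rw [FreeMonoid.ofList_cons]
        have h1 := hcoef i (FreeMonoid.ofList t)
        have h2 := c_rec (l := l) hpos i (FreeMonoid.ofList t)
        have : (lam i (FreeMonoid.ofList t) : ℂ) * ξ (FreeMonoid.of i * FreeMonoid.ofList t)
            = (lam i (FreeMonoid.ofList t) : ℂ) * (c lam l (FreeMonoid.of i * FreeMonoid.ofList t) * ξ 1) := by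
          rw [h1, ih, ← mul_assoc, ← h2, mul_assoc]
        exact mul_left_cancel₀ hne' this
    have key' : ∀ w : FreeMonoid (Fin n), ξ w = c lam l w * ξ 1 := fun w => key (FreeMonoid.toList w)
    have hξ1 : ξ 1 ≠ 0 := by
      intro h0
      apply hne
      apply lp.ext
      funext w
      rw [lp.coeFn_zero, Pi.zero_apply, key' w, h0, mul_zero]
    have hs : Summable (fun w : FreeMonoid (Fin n) => ‖ξ w‖ ^ (2:ℝ)) := by
      have := lp.memℓp ξ
      rw [← hts]
      exact this.summable (by rw [hts]; norm_num)
    have hs2 : Summable (fun w : FreeMonoid (Fin n) => ‖ξ w‖ ^ 2) := by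
      convert hs using 2 with w
      rw [← Real.rpow_natCast (‖ξ w‖) 2]
      norm_num
    have hs3 := hs2.mul_right ((‖ξ 1‖ ^ 2)⁻¹)
    refine hs3.congr fun w => ?_
    rw [key' w, norm_mul, mul_pow, mul_assoc,
      mul_inv_cancel₀ (pow_ne_zero 2 (norm_ne_zero_iff.mpr hξ1)), mul_one, norm_c_sq hpos]
  · intro hsum
    have hmem : Memℓp (c lam l) (2 : ℝ≥0∞) := by
      apply memℓp_gen
      rw [hts]
      have : Summable (fun w : FreeMonoid (Fin n) => ‖c lam l w‖ ^ 2) :=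
        hsum.congr fun w => (norm_c_sq (l := l) hpos w).symm
      convert this using 2 with w
      rw [← Real.rpow_natCast (‖c lam l w‖) 2]
      norm_num
    set ξ : Hn n := ⟨c lam l, hmem⟩ with hξ
    have hcoe : ∀ w, ξ w = c lam l w := fun w => rfl
    refine ⟨ξ, ?_, ?_⟩
    · intro h0
      have : ξ 1 = 0 := by rw [h0]; rfl
      rw [hcoe, c_one] at this
      exact one_ne_zero this
    · intro i
      apply lp.ext
      funext w
      rw [adjoint_apply T hT ξ i w, lp.coeFn_smul, Pi.smul_apply, smul_eq_mul,
        hcoe, hcoe, c_rec hpos]
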